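/- arXiv:1803.07696 — 2 statements merged into one kernel-verified Lean document; each statement's English description precedes it below -/
import Mathlib

section
/- (Lemma 3, rank upper bound.) Suppose the full-horizon KKT conditions hold for some ω ∈ ℝ^r with ω ≠ 0 and some costates λ ∈ (ℝ^n)^T. Then for every window 1 ≤ t ≤ t+l−1 ≤ T, rank H(t,l) ≤ r+n−1. -/
open Matrix

noncomputable section

variable {n m r : ℕ}

/-- Block upper bidiagonal matrix `F_x(t,l)` (0-based block indices): diagonal blocks are
`I_n`, and block `(i, i+1)` is `-(A (t+i))ᵀ`. -/
def Fx (A : ℕ → Matrix (Fin n) (Fin n) ℝ) (t l : ℕ) :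
    Matrix (Fin l × Fin n) (Fin l × Fin n) ℝ :=
  fun ip jq =>
    if ip.1 = jq.1 then (if ip.2 = jq.2 then (1 : ℝ) else 0)
    else if (jq.1 : ℕ) = (ip.1 : ℕ) + 1 then -((A (t + (ip.1 : ℕ)))ᵀ ip.2 jq.2)
    else 0

/-- Block diagonal matrix `F_u(t,l)` with diagonal blocks `(B (t+i))ᵀ`. -/
def Fu (B : ℕ → Matrix (Fin n) (Fin m) ℝ) (t l : ℕ) :
    Matrix (Fin l × Fin m) (Fin l × Fin n) ℝ :=
  fun ip jq => if ip.1 = jq.1 then (B (t + (ip.1 : ℕ)))ᵀ ip.2 jq.2 else 0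

/-- Vertical stack `Φ_x(t,l)` of the blocks `(G (t+i))ᵀ`. -/
def Phix (G : ℕ → Matrix (Fin r) (Fin n) ℝ) (t l : ℕ) :
    Matrix (Fin l × Fin n) (Fin r) ℝ :=
  fun ip q => (G (t + (ip.1 : ℕ)))ᵀ ip.2 q

/-- Vertical stack `Φ_u(t,l)` of the blocks `(D (t+i))ᵀ`. -/
def Phiu (D : ℕ → Matrix (Fin r) (Fin m) ℝ) (t l : ℕ) :
    Matrix (Fin l × Fin m) (Fin r) ℝ :=
  fun ip q => (D (t + (ip.1 : ℕ)))ᵀ ip.2 q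

/-- `V(t,l)`: all `n×n` blocks zero except the last one, which is `(A (t+l-1))ᵀ`. -/
def Vm (A : ℕ → Matrix (Fin n) (Fin n) ℝ) (t l : ℕ) :
    Matrix (Fin l × Fin n) (Fin n) ℝ :=
  fun ip q => if (ip.1 : ℕ) = l - 1 then (A (t + l - 1))ᵀ ip.2 q else 0

/-- `H₁(t,l) = F_u(t,l) · F_x(t,l)⁻¹ · Φ_x(t,l) + Φ_u(t,l)`. -/
def H1m (A : ℕ → Matrix (Fin n) (Fin n) ℝ) (B : ℕ → Matrix (Fin n) (Fin m) ℝ)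
    (G : ℕ → Matrix (Fin r) (Fin n) ℝ) (D : ℕ → Matrix (Fin r) (Fin m) ℝ) (t l : ℕ) :
    Matrix (Fin l × Fin m) (Fin r) ℝ :=
  Fu B t l * (Fx A t l)⁻¹ * Phix G t l + Phiu D t l

/-- `H₂(t,l) = F_u(t,l) · F_x(t,l)⁻¹ · V(t,l)`. -/
def H2m (A : ℕ → Matrix (Fin n) (Fin n) ℝ) (B : ℕ → Matrix (Fin n) (Fin m) ℝ) (t l : ℕ) :
    Matrix (Fin l × Fin m) (Fin n) ℝ :=
  Fu B t l * (Fx A t l)⁻¹ * Vm A t l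

/-- The recovery matrix `H(t,l) = [H₁(t,l)  H₂(t,l)]`. -/
def Hm (A : ℕ → Matrix (Fin n) (Fin n) ℝ) (B : ℕ → Matrix (Fin n) (Fin m) ℝ)
    (G : ℕ → Matrix (Fin r) (Fin n) ℝ) (D : ℕ → Matrix (Fin r) (Fin m) ℝ) (t l : ℕ) :
    Matrix (Fin l × Fin m) (Fin r ⊕ Fin n) ℝ :=
  fromCols (H1m A B G D t l) (H2m A B t l)

/-- Stack the vectors `lam t, lam (t+1), …, lam (t+l-1)` into a vector in `ℝ^{nl}`. -/
def stackVec (lam : ℕ → Fin n → ℝ) (t l : ℕ) : Fin l × Fin n → ℝ :=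
  fun ip => lam (t + (ip.1 : ℕ)) ip.2

/-- Full-horizon KKT conditions for the weight vector `ω` with costates `lam 1, …, lam T`. -/
def KKT (A : ℕ → Matrix (Fin n) (Fin n) ℝ) (B : ℕ → Matrix (Fin n) (Fin m) ℝ)
    (G : ℕ → Matrix (Fin r) (Fin n) ℝ) (D : ℕ → Matrix (Fin r) (Fin m) ℝ) (T : ℕ)
    (ω : Fin r → ℝ) (lam : ℕ → Fin n → ℝ) : Prop :=
  -(Fx A 1 T *ᵥ stackVec lam 1 T) + Phix G 1 T *ᵥ ω = 0 ∧
    Fu B 1 T *ᵥ stackVec lam 1 T + Phiu D 1 T *ᵥ ω = 0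

/-- The natural identification of `ℝ^{(l+1)·ι}`-indices with `ℝ^{l·ι} × ℝ^{ι}`-indices. -/
def splitIdx (l : ℕ) (ι : Type*) : Fin (l + 1) × ι → (Fin l × ι) ⊕ ι :=
  fun ip => if h : (ip.1 : ℕ) < l then Sum.inl (⟨ip.1, h⟩, ip.2) else Sum.inr ip.2

lemma sum_fin_val_eq {l : ℕ} (c : ℕ) (f : Fin l → ℝ) :
    ∑ j : Fin l, (if (j : ℕ) = c then f j else 0) =
      if h : c < l then f ⟨c, h⟩ else 0 := by
  split
  · next h =>
    rw [Finset.sum_eq_single (⟨c, h⟩ : Fin l)]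
    · simp
    · intro b _ hb
      rw [if_neg]
      simpa [Fin.ext_iff] using hb
    · simp
  · next h =>
    apply Finset.sum_eq_zero
    intro j _
    rw [if_neg]
    intro hj
    exact h (hj ▸ j.isLt)

lemma Fx_mulVec (A : ℕ → Matrix (Fin n) (Fin n) ℝ) (t l : ℕ) (v : Fin l × Fin n → ℝ)
    (i : Fin l) (p : Fin n) :
    (Fx A t l *ᵥ v) (i, p) =
      v (i, p) - (if h : (i : ℕ) + 1 < l then
        ∑ q, A (t + (i : ℕ)) q p * v (⟨(i : ℕ) + 1, h⟩, q) else 0) := by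
  simp only [Matrix.mulVec, dotProduct, Fx, Fintype.sum_prod_type, Matrix.transpose_apply]
  rw [← Finset.add_sum_erase _ _ (Finset.mem_univ i)]
  have h1 : ∑ q, (if i = i then (if p = q then (1:ℝ) else 0)
      else if ((i : ℕ) = (i : ℕ) + 1) then -(A (t + (i : ℕ)) q p) else 0) * v (i, q)
      = v (i, p) := by
    simp [ite_mul, Finset.sum_ite_eq]
  have h2 : ∀ j ∈ Finset.univ.erase i,
      (∑ q, (if i = j then (if p = q then (1:ℝ) else 0)
        else if ((j : ℕ) = (i : ℕ) + 1) then -(A (t + (i : ℕ)) q p) else 0) * v (j, q))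
      = if (j : ℕ) = (i : ℕ) + 1 then ∑ q, -(A (t + (i : ℕ)) q p) * v (j, q) else 0 := by
    intro j hj
    have hij : ¬ (i = j) := fun h => (Finset.mem_erase.mp hj).1 h.symm
    simp only [if_neg hij, ite_mul]
    split
    · rfl
    · simp
  rw [Finset.sum_congr rfl h2]
  rw [Finset.sum_erase (f := fun j : Fin l => if ((j:ℕ) = (i:ℕ)+1) then
      ∑ q, -(A (t + (i : ℕ)) q p) * v (j, q) else 0) Finset.univ (by simp)]
  rw [sum_fin_val_eq ((i:ℕ)+1) (fun j => ∑ q, -(A (t + (i : ℕ)) q p) * v (j, q))]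
  rw [h1]
  split
  · simp [neg_mul, Finset.sum_neg_distrib, sub_eq_add_neg]
  · simp

lemma Fu_mulVec (B : ℕ → Matrix (Fin n) (Fin m) ℝ) (t l : ℕ) (v : Fin l × Fin n → ℝ)
    (i : Fin l) (p : Fin m) :
    (Fu B t l *ᵥ v) (i, p) = ∑ q, B (t + (i : ℕ)) q p * v (i, q) := by
  simp only [Matrix.mulVec, dotProduct, Fu, Fintype.sum_prod_type, Matrix.transpose_apply]
  rw [Finset.sum_eq_single i]
  · simp
  · intro b _ hb
    simp [Ne.symm hb]
  · simp

lemma Phix_mulVec (G : ℕ → Matrix (Fin r) (Fin n) ℝ) (t l : ℕ) (ω : Fin r → ℝ)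
    (i : Fin l) (p : Fin n) :
    (Phix G t l *ᵥ ω) (i, p) = ∑ q, G (t + (i : ℕ)) q p * ω q := by
  simp [Matrix.mulVec, dotProduct, Phix]

lemma Phiu_mulVec (D : ℕ → Matrix (Fin r) (Fin m) ℝ) (t l : ℕ) (ω : Fin r → ℝ)
    (i : Fin l) (p : Fin m) :
    (Phiu D t l *ᵥ ω) (i, p) = ∑ q, D (t + (i : ℕ)) q p * ω q := by
  simp [Matrix.mulVec, dotProduct, Phiu]

lemma Vm_mulVec (A : ℕ → Matrix (Fin n) (Fin n) ℝ) (t l : ℕ) (μ : Fin n → ℝ)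
    (i : Fin l) (p : Fin n) :
    (Vm A t l *ᵥ μ) (i, p) =
      if (i : ℕ) = l - 1 then ∑ q, A (t + l - 1) q p * μ q else 0 := by
  simp only [Matrix.mulVec, dotProduct, Vm, Matrix.transpose_apply, ite_mul, zero_mul]
  split
  · rfl
  · simp

lemma Fx_det_isUnit (A : ℕ → Matrix (Fin n) (Fin n) ℝ) (t l : ℕ) :
    IsUnit (Fx A t l).det := by
  have key : ((Matrix.reindex finProdFinEquiv finProdFinEquiv) (Fx A t l)).det = 1 := by
    rw [Matrix.det_of_upperTriangular]
    · apply Finset.prod_eq_one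
      intro k _
      simp [Fx, Matrix.reindex_apply, Matrix.submatrix_apply]
    · intro a b hab
      simp only [Matrix.reindex_apply, Matrix.submatrix_apply, Fx]
      set ip := finProdFinEquiv.symm a with hip
      set jq := finProdFinEquiv.symm b with hjq
      have ha : (a : ℕ) = (ip.2 : ℕ) + n * (ip.1 : ℕ) := by
        rw [hip]
        conv_lhs => rw [← finProdFinEquiv.apply_symm_apply a]
        rfl
      have hb : (b : ℕ) = (jq.2 : ℕ) + n * (jq.1 : ℕ) := by
        rw [hjq]
        conv_lhs => rw [← finProdFinEquiv.apply_symm_apply b]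
        rfl
      have hlt : (b : ℕ) < (a : ℕ) := hab
      split
      · next h =>
        split
        · next h2 =>
          exfalso
          have : ip = jq := Prod.ext h h2
          rw [ha, hb, this] at hlt
          omega
        · rfl
      · split
        · next h2 =>
          exfalso
          have h3 : (ip.2 : ℕ) < n := ip.2.isLt
          have h1 : (jq.1 : ℕ) = (ip.1 : ℕ) + 1 := h2
          rw [ha, hb, h1] at hlt
          nlinarith
        · rfl
  have : (Fx A t l).det = 1 := by
    rw [← Matrix.det_reindex_self finProdFinEquiv (Fx A t l)]
    exact key
  rw [this]
  exact isUnit_one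

lemma inv_mulVec_of_mulVec {N : ℕ} (M : Matrix (Fin N × Fin n) (Fin N × Fin n) ℝ)
    (hu : IsUnit M.det) (x y : Fin N × Fin n → ℝ) (h : M *ᵥ x = y) :
    M⁻¹ *ᵥ y = x := by
  rw [← h, Matrix.mulVec_mulVec, Matrix.nonsing_inv_mul _ hu, Matrix.one_mulVec]

/-- Lemma 3 (rank upper bound): if the full-horizon KKT conditions hold for some nonzero
`ω`, then `rank H(t,l) ≤ r+n−1` for every window. -/
theorem recovery_matrix_rank_upper_bound (n m r T : ℕ) (hn : 0 < n) (hm : 0 < m) (hr : 0 < r) (hT : 1 ≤ T)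
    (A : ℕ → Matrix (Fin n) (Fin n) ℝ) (B : ℕ → Matrix (Fin n) (Fin m) ℝ)
    (G : ℕ → Matrix (Fin r) (Fin n) ℝ) (D : ℕ → Matrix (Fin r) (Fin m) ℝ)
    (hAT : A T = 1)
    (ω : Fin r → ℝ) (hω : ω ≠ 0)
    (lam : ℕ → Fin n → ℝ) (hKKT : KKT A B G D T ω lam)
    (t l : ℕ) (ht : 1 ≤ t) (hl : 1 ≤ l) (htl : t + l - 1 ≤ T) :
    (Hm A B G D t l).rank ≤ r + n - 1 := by
  classical
  obtain ⟨hK1, hK2⟩ := hKKT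
  -- componentwise form of the first KKT equation
  have hC : ∀ k : ℕ, 1 ≤ k → k ≤ T → ∀ p : Fin n,
      lam k p = ∑ q, G k q p * ω q +
        (if k < T then ∑ q, A k q p * lam (k + 1) q else 0) := by
    intro k hk1 hk2 p
    have hkT : k - 1 < T := by omega
    have h := congrFun hK1 (⟨k - 1, hkT⟩, p)
    rw [Pi.add_apply, Pi.neg_apply, Pi.zero_apply, Fx_mulVec, Phix_mulVec] at h
    simp only [stackVec] at h
    try simp only [Fin.val_mk] at h
    by_cases hlt : k < T
    · rw [dif_pos (by omega : k - 1 + 1 < T)] at h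
      rw [if_pos hlt]
      try simp only [Fin.val_mk] at h
      rw [(by omega : 1 + (k - 1) = k), (by omega : 1 + (k - 1 + 1) = k + 1)] at h
      linarith
    · rw [dif_neg (by omega : ¬ (k - 1 + 1 < T))] at h
      rw [if_neg hlt]
      rw [(by omega : 1 + (k - 1) = k)] at h
      linarith
  -- componentwise form of the second KKT equation
  have hC3 : ∀ k : ℕ, 1 ≤ k → k ≤ T → ∀ p : Fin m,
      ∑ q, B k q p * lam k q + ∑ q, D k q p * ω q = 0 := by
    intro k hk1 hk2 p
    have h := congrFun hK2 (⟨k - 1, by omega⟩, p)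
    rw [Pi.add_apply, Pi.zero_apply, Fu_mulVec, Phiu_mulVec] at h
    simp only [stackVec, Fin.val_mk] at h
    rwa [(by omega : 1 + (k - 1) = k)] at h
  -- the boundary costate
  set μ : Fin n → ℝ := fun q => if t + l ≤ T then lam (t + l) q else 0 with hμ
  -- the window state equation
  have hstack : Fx A t l *ᵥ stackVec lam t l = Phix G t l *ᵥ ω + Vm A t l *ᵥ μ := by
    funext ip
    obtain ⟨i, p⟩ := ip
    rw [Fx_mulVec, Pi.add_apply, Phix_mulVec, Vm_mulVec]
    have hil' : (i : ℕ) < l := i.isLt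
    have hk1 : 1 ≤ t + (i : ℕ) := by omega
    have hk2 : t + (i : ℕ) ≤ T := by omega
    have hc := hC (t + (i : ℕ)) hk1 hk2 p
    simp only [stackVec]
    by_cases hil : (i : ℕ) + 1 < l
    · rw [dif_pos hil, if_neg (by omega : ¬ ((i : ℕ) = l - 1))]
      have hlt : t + (i : ℕ) < T := by omega
      rw [if_pos hlt] at hc
      rw [(by omega : t + ((i : ℕ) + 1) = t + (i : ℕ) + 1)]
      linarith
    · have hieq : (i : ℕ) = l - 1 := by omega
      rw [dif_neg hil, if_pos hieq, (by omega : t + l - 1 = t + (i : ℕ))]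
      by_cases hlt : t + (i : ℕ) < T
      · rw [if_pos hlt] at hc
        have hμe : ∀ q, μ q = lam (t + (i : ℕ) + 1) q := by
          intro q
          rw [hμ]
          simp only
          rw [if_pos (by omega : t + l ≤ T), (by omega : t + l = t + (i : ℕ) + 1)]
        simp only [hμe]
        linarith
      · rw [if_neg hlt] at hc
        have hμ0 : ∀ q, μ q = 0 := by
          intro q
          rw [hμ]
          simp only
          rw [if_neg (by omega : ¬ (t + l ≤ T))]
        simp only [hμ0, mul_zero, Finset.sum_const_zero]
        linarith
  -- the window input equation
  have hE2 : Fu B t l *ᵥ stackVec lam t l + Phiu D t l *ᵥ ω = 0 := by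
    funext ip
    obtain ⟨i, p⟩ := ip
    rw [Pi.add_apply, Fu_mulVec, Phiu_mulVec, Pi.zero_apply]
    simp only [stackVec]
    exact hC3 (t + (i : ℕ)) (by omega) (by have := i.isLt; omega) p
  have hu := Fx_det_isUnit A t l
  have hinv : (Fx A t l)⁻¹ *ᵥ (Phix G t l *ᵥ ω + Vm A t l *ᵥ μ) = stackVec lam t l :=
    inv_mulVec_of_mulVec _ hu _ _ hstack
  -- the kernel element
  have hker : Hm A B G D t l *ᵥ Sum.elim ω μ = 0 := by
    have hexp : Hm A B G D t l *ᵥ Sum.elim ω μ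
        = Fu B t l *ᵥ ((Fx A t l)⁻¹ *ᵥ (Phix G t l *ᵥ ω + Vm A t l *ᵥ μ))
          + Phiu D t l *ᵥ ω := by
      simp only [Hm, H1m, H2m, fromCols_mulVec_sumElim, Matrix.add_mulVec,
        Matrix.mulVec_add, ← Matrix.mulVec_mulVec]
      abel
    rw [hexp, hinv, hE2]
  have hne : Sum.elim ω μ ≠ 0 := by
    intro h0
    apply hω
    funext q
    simpa using congrFun h0 (Sum.inl q)
  -- rank bound
  have hrank : (Hm A B G D t l).rank
      = Module.finrank ℝ (LinearMap.range (Hm A B G D t l).mulVecLin) := rfl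
  have hsum := LinearMap.finrank_range_add_finrank_ker (Hm A B G D t l).mulVecLin
  have hdom : Module.finrank ℝ ((Fin r ⊕ Fin n) → ℝ) = r + n := by
    simp [Module.finrank_pi]
  have hmem : Sum.elim ω μ ∈ LinearMap.ker (Hm A B G D t l).mulVecLin := by
    rw [LinearMap.mem_ker, Matrix.mulVecLin_apply]
    exact hker
  have hpos : 0 < Module.finrank ℝ (LinearMap.ker (Hm A B G D t l).mulVecLin) := by
    rw [Module.finrank_pos_iff_exists_ne_zero]
    exact ⟨⟨Sum.elim ω μ, hmem⟩, by simpa [Submodule.mk_eq_zero] using hne⟩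
  rw [hdom] at hsum
  rw [hrank]
  omega

end
end

section
/- (Lemma 3, strict rank bound under non-uniqueness.) Suppose the full-horizon KKT conditions hold for ω ∈ ℝ^r with costates λ ∈ (ℝ^n)^T, and also hold for ω̃ ∈ ℝ^r with costates λ̃ ∈ (ℝ^n)^T, where ω and ω̃ are linearly independent in ℝ^r. Then for every window 1 ≤ t ≤ t+l−1 ≤ T, rank H(t,l) < r+n−1. -/
open Matrix

noncomputable section

variable {n m r : ℕ}

lemma Fx_mulVec_apply (A : ℕ → Matrix (Fin n) (Fin n) ℝ) (t l : ℕ) (x : Fin l × Fin n → ℝ)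
    (i : Fin l) (p : Fin n) :
    (Fx A t l *ᵥ x) (i, p) =
      x (i, p) + (if h : (i : ℕ) + 1 < l then
        -(((A (t + (i : ℕ)))ᵀ *ᵥ fun q => x (⟨(i : ℕ) + 1, h⟩, q)) p) else 0) := by
  classical
  have step : (Fx A t l *ᵥ x) (i, p)
      = ∑ jq : Fin l × Fin n, ((if (i, p) = jq then x jq else 0)
          + (if (jq.1 : ℕ) = (i : ℕ) + 1 then -((A (t + (i : ℕ)))ᵀ p jq.2 * x jq) else 0)) := by
    simp only [Matrix.mulVec, dotProduct]
    refine Finset.sum_congr rfl fun jq _ => ?_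
    obtain ⟨j, q⟩ := jq
    rcases eq_or_ne i j with h1 | h1
    · subst h1
      have hne : ¬ ((i : ℕ) = (i : ℕ) + 1) := by omega
      rcases eq_or_ne p q with h2 | h2
      · subst h2; simp [Fx, hne]
      · simp [Fx, hne, h2, Prod.ext_iff]
    · have h3 : ¬ ((i, p) = (j, q)) := by simp [Prod.ext_iff]; tauto
      rcases eq_or_ne ((j : ℕ)) ((i : ℕ) + 1) with h2 | h2
      · simp [Fx, h1, h2, h3, neg_mul]
      · simp [Fx, h1, h2, h3]
  rw [step, Finset.sum_add_distrib]
  congr 1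
  · simp
  · rw [Fintype.sum_prod_type]
    by_cases h : (i : ℕ) + 1 < l
    · rw [dif_pos h]
      rw [Finset.sum_eq_single (⟨(i : ℕ) + 1, h⟩ : Fin l)]
      · simp [Matrix.mulVec, dotProduct]
      · intro j _ hj
        have hne : ¬ ((j : ℕ) = (i : ℕ) + 1) := fun hc => hj (Fin.ext hc)
        simp [hne]
      · simp
    · rw [dif_neg h]
      refine Finset.sum_eq_zero fun j _ => Finset.sum_eq_zero fun q _ => ?_
      have hne : ¬ ((j : ℕ) = (i : ℕ) + 1) := by have := j.isLt; omega
      simp [hne]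

lemma Fu_mulVec_apply (B : ℕ → Matrix (Fin n) (Fin m) ℝ) (t l : ℕ) (x : Fin l × Fin n → ℝ)
    (i : Fin l) (p : Fin m) :
    (Fu B t l *ᵥ x) (i, p) = ((B (t + (i : ℕ)))ᵀ *ᵥ fun q => x (i, q)) p := by
  classical
  simp only [Matrix.mulVec, dotProduct, Fu]
  rw [Fintype.sum_prod_type, Finset.sum_eq_single i]
  · simp
  · intro j _ hj
    have : ¬ (i = j) := fun hc => hj hc.symm
    simp [this]
  · simp

lemma Phix_mulVec_apply (G : ℕ → Matrix (Fin r) (Fin n) ℝ) (t l : ℕ) (ω : Fin r → ℝ)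
    (i : Fin l) (p : Fin n) :
    (Phix G t l *ᵥ ω) (i, p) = ((G (t + (i : ℕ)))ᵀ *ᵥ ω) p := rfl

lemma Phiu_mulVec_apply (D : ℕ → Matrix (Fin r) (Fin m) ℝ) (t l : ℕ) (ω : Fin r → ℝ)
    (i : Fin l) (p : Fin m) :
    (Phiu D t l *ᵥ ω) (i, p) = ((D (t + (i : ℕ)))ᵀ *ᵥ ω) p := rfl

lemma Vm_mulVec_apply (A : ℕ → Matrix (Fin n) (Fin n) ℝ) (t l : ℕ) (y : Fin n → ℝ)
    (i : Fin l) (p : Fin n) :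
    (Vm A t l *ᵥ y) (i, p) = if (i : ℕ) = l - 1 then ((A (t + l - 1))ᵀ *ᵥ y) p else 0 := by
  by_cases hc : (i : ℕ) = l - 1 <;>
    simp [Vm, Matrix.mulVec, dotProduct, hc]

lemma Fx_blockTriangular (A : ℕ → Matrix (Fin n) (Fin n) ℝ) (t l : ℕ) :
    (Fx A t l).BlockTriangular (fun ip => ip.1) := by
  rintro ⟨i, p⟩ ⟨j, q⟩ hji
  have hji' : (j : ℕ) < (i : ℕ) := hji
  have h1 : ¬ (i = j) := by intro hc; subst hc; omega
  have h2 : ¬ ((j : ℕ) = (i : ℕ) + 1) := by omega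
  simp [Fx, h1, h2]

lemma Fx_det (A : ℕ → Matrix (Fin n) (Fin n) ℝ) (t l : ℕ) : (Fx A t l).det = 1 := by
  classical
  rw [(Fx_blockTriangular A t l).det]
  refine Finset.prod_eq_one fun a _ => ?_
  have h : (Fx A t l).toSquareBlock (fun ip => ip.1) a = 1 := by
    ext ⟨⟨i, p⟩, hi⟩ ⟨⟨j, q⟩, hj⟩
    simp only [Matrix.toSquareBlock_def, Matrix.of_apply]
    have hij : i = j := by
      have hi' : i = a := hi
      have hj' : j = a := hj
      rw [hi', hj']
    subst hij
    rcases eq_or_ne p q with h2 | h2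
    · subst h2; simp [Fx, Matrix.one_apply]
    · simp [Fx, Matrix.one_apply, h2, Subtype.ext_iff, Prod.ext_iff]
  rw [h, Matrix.det_one]

lemma kkt_costate_rec {T : ℕ} {A : ℕ → Matrix (Fin n) (Fin n) ℝ}
    {B : ℕ → Matrix (Fin n) (Fin m) ℝ} {G : ℕ → Matrix (Fin r) (Fin n) ℝ}
    {D : ℕ → Matrix (Fin r) (Fin m) ℝ} {ω : Fin r → ℝ} {lam : ℕ → Fin n → ℝ}
    (h : KKT A B G D T ω lam) {k : ℕ} (hk1 : 1 ≤ k) (hk2 : k ≤ T) (p : Fin n) :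
    lam k p = (if k + 1 ≤ T then ((A k)ᵀ *ᵥ lam (k + 1)) p else 0) + ((G k)ᵀ *ᵥ ω) p := by
  have hkT : k - 1 < T := by omega
  have h1 := congrFun h.1 (⟨k - 1, hkT⟩, p)
  rw [Pi.add_apply, Pi.neg_apply, Pi.zero_apply, Fx_mulVec_apply, Phix_mulVec_apply] at h1
  have e1 : (1 : ℕ) + ((⟨k - 1, hkT⟩ : Fin T) : ℕ) = k := by simp; omega
  simp only [stackVec, e1] at h1
  by_cases hlt : k < T
  · have hlt' : ((⟨k - 1, hkT⟩ : Fin T) : ℕ) + 1 < T := by simp; omega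
    rw [dif_pos hlt'] at h1
    have e2 : 1 + (k - 1 + 1) = k + 1 := by omega
    simp only [e2] at h1
    rw [if_pos (by omega : k + 1 ≤ T)]
    linarith
  · have hlt' : ¬ (((⟨k - 1, hkT⟩ : Fin T) : ℕ) + 1 < T) := by simp; omega
    rw [dif_neg hlt'] at h1
    rw [if_neg (by omega : ¬ (k + 1 ≤ T))]
    linarith

lemma kkt_stationarity {T : ℕ} {A : ℕ → Matrix (Fin n) (Fin n) ℝ}
    {B : ℕ → Matrix (Fin n) (Fin m) ℝ} {G : ℕ → Matrix (Fin r) (Fin n) ℝ}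
    {D : ℕ → Matrix (Fin r) (Fin m) ℝ} {ω : Fin r → ℝ} {lam : ℕ → Fin n → ℝ}
    (h : KKT A B G D T ω lam) {k : ℕ} (hk1 : 1 ≤ k) (hk2 : k ≤ T) (p : Fin m) :
    ((B k)ᵀ *ᵥ lam k) p + ((D k)ᵀ *ᵥ ω) p = 0 := by
  have hkT : k - 1 < T := by omega
  have h1 := congrFun h.2 (⟨k - 1, hkT⟩, p)
  rw [Pi.add_apply, Pi.zero_apply, Fu_mulVec_apply, Phiu_mulVec_apply] at h1
  have e1 : (1 : ℕ) + ((⟨k - 1, hkT⟩ : Fin T) : ℕ) = k := by simp; omega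
  simp only [stackVec, e1] at h1
  exact h1

lemma kkt_window {T : ℕ} {A : ℕ → Matrix (Fin n) (Fin n) ℝ}
    {B : ℕ → Matrix (Fin n) (Fin m) ℝ} {G : ℕ → Matrix (Fin r) (Fin n) ℝ}
    {D : ℕ → Matrix (Fin r) (Fin m) ℝ} {ω : Fin r → ℝ} {lam : ℕ → Fin n → ℝ}
    (h : KKT A B G D T ω lam) (t l : ℕ) (ht : 1 ≤ t) (hl : 1 ≤ l) (htl : t + l - 1 ≤ T) :
    Hm A B G D t l *ᵥ
      Sum.elim ω (fun q => if t + l ≤ T then lam (t + l) q else 0) = 0 := by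
  classical
  set y : Fin n → ℝ := fun q => if t + l ≤ T then lam (t + l) q else 0 with hy
  have hdet : IsUnit (Fx A t l).det := by rw [Fx_det]; exact isUnit_one
  have hA : Fx A t l *ᵥ stackVec lam t l = Phix G t l *ᵥ ω + Vm A t l *ᵥ y := by
    funext ip; obtain ⟨i, p⟩ := ip
    rw [Fx_mulVec_apply, Pi.add_apply, Phix_mulVec_apply, Vm_mulVec_apply]
    have hk1 : 1 ≤ t + (i : ℕ) := by omega
    have hk2 : t + (i : ℕ) ≤ T := by have := i.isLt; omega
    have hrec := kkt_costate_rec h hk1 hk2 p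
    show lam (t + (i : ℕ)) p + _ = _
    rw [hrec]
    by_cases hil : (i : ℕ) + 1 < l
    · rw [dif_pos hil, if_neg (by omega : ¬ ((i : ℕ) = l - 1))]
      rw [if_pos (by omega : t + (i : ℕ) + 1 ≤ T)]
      have e2 : (fun q => stackVec lam t l (⟨(i : ℕ) + 1, hil⟩, q)) = lam (t + (i : ℕ) + 1) := by
        funext q
        show lam (t + ((i : ℕ) + 1)) q = lam (t + (i : ℕ) + 1) q
        rw [Nat.add_assoc]
      rw [e2]; ring
    · rw [dif_neg hil, if_pos (by omega : (i : ℕ) = l - 1)]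
      have h1 : t + (i : ℕ) = t + l - 1 := by have := i.isLt; omega
      rw [h1, show t + l - 1 + 1 = t + l from by omega]
      have hyy : ((A (t + l - 1))ᵀ *ᵥ y) p
          = if t + l ≤ T then ((A (t + l - 1))ᵀ *ᵥ lam (t + l)) p else 0 := by
        by_cases hT : t + l ≤ T
        · simp only [hy, hT, if_true]
        · have : y = 0 := by funext q; simp [hy, hT]
          simp [this, hT]
      rw [hyy]; ring
  have hB : Fu B t l *ᵥ stackVec lam t l + Phiu D t l *ᵥ ω = 0 := by
    funext ip; obtain ⟨i, p⟩ := ip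
    rw [Pi.add_apply, Pi.zero_apply, Fu_mulVec_apply, Phiu_mulVec_apply]
    have hk1 : 1 ≤ t + (i : ℕ) := by omega
    have hk2 : t + (i : ℕ) ≤ T := by have := i.isLt; omega
    have := kkt_stationarity h hk1 hk2 p
    simpa [stackVec] using this
  have key : (Fx A t l)⁻¹ *ᵥ (Phix G t l *ᵥ ω + Vm A t l *ᵥ y) = stackVec lam t l := by
    rw [← hA, Matrix.mulVec_mulVec, Matrix.nonsing_inv_mul _ hdet, Matrix.one_mulVec]
  calc Hm A B G D t l *ᵥ Sum.elim ω y
      = H1m A B G D t l *ᵥ ω + H2m A B t l *ᵥ y := by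
        rw [Hm, fromCols_mulVec_sumElim]
    _ = (Fu B t l *ᵥ ((Fx A t l)⁻¹ *ᵥ (Phix G t l *ᵥ ω)) + Phiu D t l *ᵥ ω)
        + Fu B t l *ᵥ ((Fx A t l)⁻¹ *ᵥ (Vm A t l *ᵥ y)) := by
        simp only [H1m, H2m, Matrix.add_mulVec, ← Matrix.mulVec_mulVec]
    _ = Fu B t l *ᵥ ((Fx A t l)⁻¹ *ᵥ (Phix G t l *ᵥ ω + Vm A t l *ᵥ y))
        + Phiu D t l *ᵥ ω := by
        rw [add_right_comm, ← Matrix.mulVec_add, ← Matrix.mulVec_add]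
    _ = Fu B t l *ᵥ stackVec lam t l + Phiu D t l *ᵥ ω := by rw [key]
    _ = 0 := hB

/-- Lemma 3 (strict rank bound under non-uniqueness): if the full-horizon KKT conditions
hold for two linearly independent weight vectors, then `rank H(t,l) < r+n−1`. -/
theorem recovery_matrix_rank_strict_bound (n m r T : ℕ) (hn : 0 < n) (hm : 0 < m) (hr : 0 < r) (hT : 1 ≤ T)
    (A : ℕ → Matrix (Fin n) (Fin n) ℝ) (B : ℕ → Matrix (Fin n) (Fin m) ℝ)
    (G : ℕ → Matrix (Fin r) (Fin n) ℝ) (D : ℕ → Matrix (Fin r) (Fin m) ℝ)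
    (hAT : A T = 1)
    (ω ωt : Fin r → ℝ)
    (lam lamt : ℕ → Fin n → ℝ)
    (hKKT : KKT A B G D T ω lam) (hKKTt : KKT A B G D T ωt lamt)
    (hind : LinearIndependent ℝ ![ω, ωt])
    (t l : ℕ) (ht : 1 ≤ t) (hl : 1 ≤ l) (htl : t + l - 1 ≤ T) :
    (Hm A B G D t l).rank < r + n - 1 := by
  classical
  set M := Hm A B G D t l with hM
  set v₁ : Fin r ⊕ Fin n → ℝ :=
    Sum.elim ω (fun q => if t + l ≤ T then lam (t + l) q else 0) with hv₁def
  set v₂ : Fin r ⊕ Fin n → ℝ :=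
    Sum.elim ωt (fun q => if t + l ≤ T then lamt (t + l) q else 0) with hv₂def
  have hv₁ : M *ᵥ v₁ = 0 := kkt_window hKKT t l ht hl htl
  have hv₂ : M *ᵥ v₂ = 0 := kkt_window hKKTt t l ht hl htl
  have hli : LinearIndependent ℝ ![v₁, v₂] := by
    apply LinearIndependent.of_comp (LinearMap.funLeft ℝ ℝ (Sum.inl : Fin r → Fin r ⊕ Fin n))
    have hcomp : (⇑(LinearMap.funLeft ℝ ℝ (Sum.inl : Fin r → Fin r ⊕ Fin n))) ∘ ![v₁, v₂]
        = ![ω, ωt] := by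
      funext j
      fin_cases j <;> rfl
    rw [hcomp]; exact hind
  have hker : Submodule.span ℝ (Set.range ![v₁, v₂]) ≤ LinearMap.ker M.mulVecLin := by
    rw [Submodule.span_le]
    rintro x ⟨j, rfl⟩
    fin_cases j <;>
      simp [LinearMap.mem_ker, Matrix.mulVecLin_apply, hv₁, hv₂]
  have h2 : 2 ≤ Module.finrank ℝ (LinearMap.ker M.mulVecLin) := by
    have hspan := finrank_span_eq_card hli
    have : Module.finrank ℝ (Submodule.span ℝ (Set.range ![v₁, v₂])) = 2 := by
      rw [hspan]; simp
    rw [← this]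
    exact Submodule.finrank_mono hker
  have hrn := LinearMap.finrank_range_add_finrank_ker M.mulVecLin
  rw [Module.finrank_fintype_fun_eq_card] at hrn
  have hcard : Fintype.card (Fin r ⊕ Fin n) = r + n := by simp
  rw [hcard] at hrn
  have hrank : M.rank = Module.finrank ℝ (LinearMap.range M.mulVecLin) := rfl
  rw [hrank]
  omega

end
end
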